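/- Let Δ be a two-dimensional lattice polygon with lattice width lw(Δ) = d. Suppose that for every extreme point P of Δ one has lw(conv((Δ ∩ ℤ²) \ {P})) < d. Then there exist a matrix A ∈ GL₂(ℤ) (an integer 2×2 matrix with determinant ±1) and a vector b ∈ ℤ² such that the image of Δ under the affine map x ↦ Ax + b is contained in the square [0,d] × [0,d]. -/

import Mathlib

open scoped Pointwise

noncomputable section

/-- The embedding of the lattice `ℤ²` into `ℝ²`. -/
def ι2 (p : ℤ × ℤ) : ℝ × ℝ := ((p.1 : ℝ), (p.2 : ℝ))

/-- A lattice polygon: the convex hull of a finite set of lattice points. -/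
def IsLatticePolygon (Δ : Set (ℝ × ℝ)) : Prop :=
  ∃ S : Finset (ℤ × ℤ), Δ = convexHull ℝ (ι2 '' ↑S)

/-- The translate `A − P` of a set. -/
def transl (A : Set (ℝ × ℝ)) (P : ℝ × ℝ) : Set (ℝ × ℝ) := (fun x => x - P) '' A

/-- The lattice width of a polygon: the infimum over all nonzero integral linear forms
of the width `max_{x∈Δ} f(x) − min_{x∈Δ} f(x)`. -/
def latticeWidth (Δ : Set (ℝ × ℝ)) : ℝ :=
  sInf { w : ℝ | ∃ a b : ℤ, ¬(a = 0 ∧ b = 0) ∧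
    w = sSup ((fun x : ℝ × ℝ => (a : ℝ) * x.1 + (b : ℝ) * x.2) '' Δ) -
        sInf ((fun x : ℝ × ℝ => (a : ℝ) * x.1 + (b : ℝ) * x.2) '' Δ) }

namespace Stmt8Aux

/-! ### Integer width machinery -/

/-- integer linear form evaluation -/
def ev (g P : ℤ × ℤ) : ℤ := g.1 * P.1 + g.2 * P.2

def wmax (g : ℤ × ℤ) (G : Finset (ℤ × ℤ)) : ℤ := WithBot.unbotD 0 ((G.image (ev g)).max)

def wmin (g : ℤ × ℤ) (G : Finset (ℤ × ℤ)) : ℤ := WithTop.untopD 0 ((G.image (ev g)).min)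

def wd (g : ℤ × ℤ) (G : Finset (ℤ × ℤ)) : ℤ := wmax g G - wmin g G

variable {g : ℤ × ℤ} {G : Finset (ℤ × ℤ)}

lemma wmax_eq (hG : G.Nonempty) : wmax g G = (G.image (ev g)).max' (hG.image _) := by
  rw [wmax, ← Finset.coe_max' (hG.image (ev g))]
  rfl

lemma wmin_eq (hG : G.Nonempty) : wmin g G = (G.image (ev g)).min' (hG.image _) := by
  rw [wmin, ← Finset.coe_min' (hG.image (ev g))]
  rfl

lemma le_wmax {P : ℤ × ℤ} (hP : P ∈ G) : ev g P ≤ wmax g G := by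
  rw [wmax_eq ⟨P, hP⟩]
  exact Finset.le_max' _ _ (Finset.mem_image_of_mem _ hP)

lemma wmin_le {P : ℤ × ℤ} (hP : P ∈ G) : wmin g G ≤ ev g P := by
  rw [wmin_eq ⟨P, hP⟩]
  exact Finset.min'_le _ _ (Finset.mem_image_of_mem _ hP)

lemma exists_wmax (hG : G.Nonempty) : ∃ P ∈ G, ev g P = wmax g G := by
  rw [wmax_eq hG]
  have := Finset.max'_mem (G.image (ev g)) (hG.image _)
  rw [Finset.mem_image] at this
  obtain ⟨P, hP, h⟩ := this
  exact ⟨P, hP, h⟩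

lemma exists_wmin (hG : G.Nonempty) : ∃ P ∈ G, ev g P = wmin g G := by
  rw [wmin_eq hG]
  have := Finset.min'_mem (G.image (ev g)) (hG.image _)
  rw [Finset.mem_image] at this
  obtain ⟨P, hP, h⟩ := this
  exact ⟨P, hP, h⟩

lemma wd_nonneg (hG : G.Nonempty) : 0 ≤ wd g G := by
  obtain ⟨P, hP⟩ := hG
  have h1 := le_wmax (g := g) hP
  have h2 := wmin_le (g := g) hP
  simp only [wd]; omega

lemma diff_le_wd {P Q : ℤ × ℤ} (hP : P ∈ G) (hQ : Q ∈ G) : ev g P - ev g Q ≤ wd g G := by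
  have h1 := le_wmax (g := g) hP
  have h2 := wmin_le (g := g) hQ
  simp only [wd]; omega

lemma wd_le_of_bounds {k : ℤ} (hG : G.Nonempty)
    (h : ∀ P ∈ G, ∀ Q ∈ G, ev g P - ev g Q ≤ k) : wd g G ≤ k := by
  obtain ⟨P, hP, hP'⟩ := exists_wmax (g := g) hG
  obtain ⟨Q, hQ, hQ'⟩ := exists_wmin (g := g) hG
  have := h P hP Q hQ
  simp only [wd]; omega

lemma wd_mono {G' : Finset (ℤ × ℤ)} (hG' : G'.Nonempty) (hsub : G' ⊆ G) :
    wd g G' ≤ wd g G :=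
  wd_le_of_bounds hG' fun P hP Q hQ => diff_le_wd (hsub hP) (hsub hQ)

lemma ev_neg (P : ℤ × ℤ) : ev (-g) P = -ev g P := by simp [ev]; ring

lemma wd_neg (hG : G.Nonempty) : wd (-g) G = wd g G := by
  apply le_antisymm
  · apply wd_le_of_bounds hG
    intro P hP Q hQ
    rw [ev_neg, ev_neg]
    have := diff_le_wd (g := g) hQ hP
    omega
  · apply wd_le_of_bounds hG
    intro P hP Q hQ
    have := diff_le_wd (g := -g) hQ hP
    rw [ev_neg, ev_neg] at this
    omega

lemma ev_smul (k : ℤ) (P : ℤ × ℤ) : ev (k * g.1, k * g.2) P = k * ev g P := by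
  simp [ev]; ring

lemma wd_smul_pos {k : ℤ} (hk : 0 < k) (hG : G.Nonempty) :
    wd (k * g.1, k * g.2) G = k * wd g G := by
  apply le_antisymm
  · apply wd_le_of_bounds hG
    intro P hP Q hQ
    rw [ev_smul, ev_smul, ← mul_sub]
    have h := diff_le_wd (g := g) hP hQ
    exact mul_le_mul_of_nonneg_left h hk.le
  · obtain ⟨P, hP, hP'⟩ := exists_wmax (g := g) hG
    obtain ⟨Q, hQ, hQ'⟩ := exists_wmin (g := g) hG
    have h := diff_le_wd (g := (k * g.1, k * g.2)) hP hQ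
    rw [ev_smul, ev_smul, ← mul_sub] at h
    have : wd g G = ev g P - ev g Q := by simp only [wd]; omega
    rw [this]
    exact h

lemma ev_01 (Q : ℤ × ℤ) : ev (0, 1) Q = Q.2 := by simp [ev]

lemma ev_10 (Q : ℤ × ℤ) : ev (1, 0) Q = Q.1 := by simp [ev]

/-! ### Bridging real suprema with integer widths -/

lemma ι2_injective : Function.Injective ι2 := by
  intro p q h
  simp only [ι2, Prod.mk.injEq] at h
  exact Prod.ext (by exact_mod_cast h.1) (by exact_mod_cast h.2)

lemma lin2 (a b : ℝ) : IsLinearMap ℝ (fun z : ℝ × ℝ => a * z.1 + b * z.2) := by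
  constructor
  · intro x y; simp [Prod.fst_add, Prod.snd_add]; ring
  · intro c x; simp [Prod.smul_fst, Prod.smul_snd, smul_eq_mul]; ring

lemma evR_ι2 (g P : ℤ × ℤ) :
    (g.1 : ℝ) * (ι2 P).1 + (g.2 : ℝ) * (ι2 P).2 = ((ev g P : ℤ) : ℝ) := by
  simp [ι2, ev]

lemma hull_le_wmax :
    convexHull ℝ (ι2 '' ↑G) ⊆
      {z : ℝ × ℝ | (g.1 : ℝ) * z.1 + (g.2 : ℝ) * z.2 ≤ (wmax g G : ℝ)} := by
  apply convexHull_min _ (convex_halfSpace_le (lin2 _ _) _)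
  rintro z ⟨P, hP, rfl⟩
  simp only [Set.mem_setOf_eq, evR_ι2]
  exact_mod_cast le_wmax (Finset.mem_coe.1 hP)

lemma wmin_le_hull :
    convexHull ℝ (ι2 '' ↑G) ⊆
      {z : ℝ × ℝ | (wmin g G : ℝ) ≤ (g.1 : ℝ) * z.1 + (g.2 : ℝ) * z.2} := by
  apply convexHull_min _ (convex_halfSpace_ge (lin2 _ _) _)
  rintro z ⟨P, hP, rfl⟩
  simp only [Set.mem_setOf_eq, evR_ι2]
  exact_mod_cast wmin_le (Finset.mem_coe.1 hP)

lemma sSup_hull (a b : ℤ) (hG : G.Nonempty) :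
    sSup ((fun x : ℝ × ℝ => (a : ℝ) * x.1 + (b : ℝ) * x.2) '' convexHull ℝ (ι2 '' ↑G))
      = (wmax (a, b) G : ℝ) := by
  obtain ⟨P, hP, hPmax⟩ := exists_wmax (g := (a, b)) hG
  have hPm : ι2 P ∈ convexHull ℝ (ι2 '' ↑G) :=
    subset_convexHull ℝ _ ⟨P, Finset.mem_coe.2 hP, rfl⟩
  have hub : ∀ w ∈ (fun x : ℝ × ℝ => (a : ℝ) * x.1 + (b : ℝ) * x.2) '' convexHull ℝ (ι2 '' ↑G),
      w ≤ (wmax (a, b) G : ℝ) := by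
    rintro w ⟨z, hz, rfl⟩
    exact hull_le_wmax (g := (a, b)) hz
  apply le_antisymm
  · exact csSup_le ⟨_, Set.mem_image_of_mem _ hPm⟩ hub
  · apply le_csSup ⟨_, hub⟩
    refine ⟨ι2 P, hPm, ?_⟩
    simp only []
    rw [show ((a:ℝ)) = (((a,b):ℤ×ℤ).1 : ℝ) from rfl,
      show ((b:ℝ)) = (((a,b):ℤ×ℤ).2 : ℝ) from rfl, evR_ι2, hPmax]

lemma sInf_hull (a b : ℤ) (hG : G.Nonempty) :
    sInf ((fun x : ℝ × ℝ => (a : ℝ) * x.1 + (b : ℝ) * x.2) '' convexHull ℝ (ι2 '' ↑G))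
      = (wmin (a, b) G : ℝ) := by
  obtain ⟨P, hP, hPmin⟩ := exists_wmin (g := (a, b)) hG
  have hPm : ι2 P ∈ convexHull ℝ (ι2 '' ↑G) :=
    subset_convexHull ℝ _ ⟨P, Finset.mem_coe.2 hP, rfl⟩
  have hlb : ∀ w ∈ (fun x : ℝ × ℝ => (a : ℝ) * x.1 + (b : ℝ) * x.2) '' convexHull ℝ (ι2 '' ↑G),
      (wmin (a, b) G : ℝ) ≤ w := by
    rintro w ⟨z, hz, rfl⟩
    exact wmin_le_hull (g := (a, b)) hz
  apply le_antisymm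
  · apply csInf_le ⟨_, hlb⟩
    refine ⟨ι2 P, hPm, ?_⟩
    simp only []
    rw [show ((a:ℝ)) = (((a,b):ℤ×ℤ).1 : ℝ) from rfl,
      show ((b:ℝ)) = (((a,b):ℤ×ℤ).2 : ℝ) from rfl, evR_ι2, hPmin]
  · exact le_csInf ⟨_, Set.mem_image_of_mem _ hPm⟩ hlb

lemma width_hull (a b : ℤ) (hG : G.Nonempty) :
    sSup ((fun x : ℝ × ℝ => (a : ℝ) * x.1 + (b : ℝ) * x.2) '' convexHull ℝ (ι2 '' ↑G)) -
      sInf ((fun x : ℝ × ℝ => (a : ℝ) * x.1 + (b : ℝ) * x.2) '' convexHull ℝ (ι2 '' ↑G))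
      = (wd (a, b) G : ℝ) := by
  rw [sSup_hull a b hG, sInf_hull a b hG, wd]
  push_cast
  ring

/-! ### Interior of subsets of lines is empty -/

lemma interior_empty_of_subset_line {a b c : ℝ} (hab : ¬(a = 0 ∧ b = 0)) {s : Set (ℝ × ℝ)}
    (hs : s ⊆ {z : ℝ × ℝ | a * z.1 + b * z.2 = c}) : interior s = ∅ := by
  by_contra h
  obtain ⟨x, hx⟩ := Set.nonempty_iff_ne_empty.2 h
  rw [mem_interior_iff_mem_nhds, Metric.mem_nhds_iff] at hx
  obtain ⟨ε, hε, hball⟩ := hx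
  have habs : 0 < |a| + |b| := by
    cases (not_and_or.1 hab) with
    | inl h' => have := abs_pos.2 h'; positivity
    | inr h' => have := abs_pos.2 h'; positivity
  set δ := ε / (2 * (|a| + |b|)) with hδdef
  have hδ : 0 < δ := by positivity
  set z : ℝ × ℝ := (x.1 + δ * a, x.2 + δ * b) with hz
  have hzball : z ∈ Metric.ball x ε := by
    rw [Metric.mem_ball, Prod.dist_eq]
    have h1 : dist z.1 x.1 = δ * |a| := by
      rw [Real.dist_eq]; simp [hz, abs_mul, abs_of_pos hδ]
    have h2 : dist z.2 x.2 = δ * |b| := by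
      rw [Real.dist_eq]; simp [hz, abs_mul, abs_of_pos hδ]
    rw [h1, h2]
    have : δ * |a| ⊔ δ * |b| ≤ δ * (|a| + |b|) := by
      apply max_le <;> nlinarith [abs_nonneg a, abs_nonneg b]
    have hlt : δ * (|a| + |b|) < ε := by
      rw [hδdef]; rw [div_mul_eq_mul_div, div_lt_iff₀ (by positivity)]; nlinarith
    exact lt_of_le_of_lt this hlt
  have hxs : x ∈ s := hball (Metric.mem_ball_self hε)
  have hzline := hs (hball hzball)
  have hxline := hs hxs
  simp only [Set.mem_setOf_eq, hz] at hzline hxline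
  have : δ * (a ^ 2 + b ^ 2) = 0 := by nlinarith
  have hab2 : 0 < a ^ 2 + b ^ 2 := by
    cases (not_and_or.1 hab) with
    | inl h' => positivity
    | inr h' => positivity
  nlinarith

/-! ### The strip-narrowing lemma -/

lemma balanced_div (a b : ℤ) (ha : a ≠ 0) : ∃ m r : ℤ, a * m = b - r ∧ 2 * |r| ≤ |a| := by
  obtain ⟨A, hA⟩ : ∃ A : ℤ, A = |a| := ⟨_, rfl⟩
  have hA0 : 0 < A := hA ▸ abs_pos.2 ha
  obtain ⟨q, hq⟩ : ∃ q : ℤ, q = b / A := ⟨_, rfl⟩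
  obtain ⟨r₀, hr₀⟩ : ∃ r₀ : ℤ, r₀ = b % A := ⟨_, rfl⟩
  have h1 : A * q + r₀ = b := by rw [hq, hr₀]; exact Int.mul_ediv_add_emod b A
  have h2 : 0 ≤ r₀ := hr₀ ▸ Int.emod_nonneg b (by omega)
  have h3 : r₀ < A := hr₀ ▸ Int.emod_lt_of_pos b hA0
  have hsign : a = A ∨ a = -A := by
    rcases abs_cases a with ⟨h, _⟩ | ⟨h, _⟩
    · left; omega
    · right; omega
  rw [← hA]
  by_cases hc : 2 * r₀ ≤ A
  · have hb : 2 * |r₀| ≤ A := by rw [abs_of_nonneg h2]; omega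
    rcases hsign with h | h
    · exact ⟨q, r₀, by rw [h]; linear_combination h1, hb⟩
    · exact ⟨-q, r₀, by rw [h]; linear_combination h1, hb⟩
  · have hb : 2 * |r₀ - A| ≤ A := by rw [abs_of_nonpos (by omega)]; omega
    rcases hsign with h | h
    · exact ⟨q + 1, r₀ - A, by rw [h]; linear_combination h1, hb⟩
    · exact ⟨-(q + 1), r₀ - A, by rw [h]; linear_combination h1, hb⟩

lemma strip {G : Finset (ℤ × ℤ)} (a b y₀ d w s₀ : ℤ) (ha : a ≠ 0) (hd : 0 ≤ d) (hw : 0 ≤ w)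
    (hy : ∀ Q ∈ G, y₀ ≤ Q.2 ∧ Q.2 ≤ y₀ + d)
    (hs : ∀ Q ∈ G, s₀ ≤ ev (a, b) Q ∧ ev (a, b) Q ≤ s₀ + w) :
    ∃ m : ℤ, ∀ P ∈ G, ∀ Q ∈ G,
      2 * |a| * (ev (1, m) P - ev (1, m) Q) ≤ 2 * w + |a| * d := by
  obtain ⟨m, r, hmr, hr⟩ := balanced_div a b ha
  refine ⟨m, fun P hP Q hQ => ?_⟩
  have key : ∀ R : ℤ × ℤ, a * ev (1, m) R = ev (a, b) R - r * R.2 := by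
    intro R
    simp only [ev]
    linear_combination R.2 * hmr
  have hsP := hs P hP; have hsQ := hs Q hQ
  have hyP := hy P hP; have hyQ := hy Q hQ
  have habs : |a * (ev (1, m) P - ev (1, m) Q)| ≤ w + |r| * d := by
    have heq : a * (ev (1, m) P - ev (1, m) Q)
        = (ev (a, b) P - ev (a, b) Q) - r * (P.2 - Q.2) := by
      rw [mul_sub, key P, key Q]; ring
    rw [heq]
    have hb1 : |ev (a, b) P - ev (a, b) Q| ≤ w := abs_le.2 (by omega)
    have hb2 : |r * (P.2 - Q.2)| ≤ |r| * d := by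
      rw [abs_mul]
      exact mul_le_mul_of_nonneg_left (abs_le.2 (by omega)) (abs_nonneg r)
    calc |(ev (a, b) P - ev (a, b) Q) - r * (P.2 - Q.2)|
        ≤ |ev (a, b) P - ev (a, b) Q| + |r * (P.2 - Q.2)| := abs_sub _ _
      _ ≤ w + |r| * d := add_le_add hb1 hb2
  have h3 : |a| * (ev (1, m) P - ev (1, m) Q) ≤ |a * (ev (1, m) P - ev (1, m) Q)| := by
    rw [abs_mul]
    exact mul_le_mul_of_nonneg_left (le_abs_self _) (abs_nonneg a)
  have h4 : 2 * (|r| * d) ≤ |a| * d := by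
    have := mul_le_mul_of_nonneg_right hr hd
    nlinarith
  nlinarith

/-! ### The key geometric contradiction -/

lemma contra {F : Finset (ℤ × ℤ)}
    (hF4 : ∀ X : ℤ × ℤ, ι2 X ∈ convexHull ℝ (ι2 '' ↑F) → X ∈ F)
    {P t₀ b₀ : ℤ × ℤ} (hPF : P ∈ F) (ht₀ : t₀ ∈ F) (hb₀ : b₀ ∈ F)
    (hPt : P ≠ t₀) (hPb : P ≠ b₀)
    (hy : ∀ Q ∈ F, b₀.2 ≤ Q.2 ∧ Q.2 ≤ t₀.2)
    (hyd : b₀.2 < t₀.2)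
    (e m : ℤ) (he : e = 1 ∨ e = -1)
    (hmarg : ∀ Q ∈ F, Q ≠ P → ev (e, m) Q ≤ ev (e, m) P - 2) : False := by
  classical
  obtain ⟨c, hc⟩ : ∃ c : ℤ, c = ev (e, m) P := ⟨_, rfl⟩
  have hst : ev (e, m) t₀ ≤ c - 2 := hc ▸ hmarg t₀ ht₀ (fun h => hPt h.symm)
  have hsb : ev (e, m) b₀ ≤ c - 2 := hc ▸ hmarg b₀ hb₀ (fun h => hPb h.symm)
  have hyP := hy P hPF
  have hD : (0 : ℝ) < (t₀.2 : ℝ) - (b₀.2 : ℝ) := by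
    have : (b₀.2 : ℝ) < (t₀.2 : ℝ) := by exact_mod_cast hyd
    linarith
  obtain ⟨t, htdef⟩ : ∃ t : ℝ, t = ((P.2 : ℝ) - (b₀.2 : ℝ)) / ((t₀.2 : ℝ) - (b₀.2 : ℝ)) :=
    ⟨_, rfl⟩
  have hyP1 : (b₀.2 : ℝ) ≤ (P.2 : ℝ) := by exact_mod_cast hyP.1
  have hyP2 : (P.2 : ℝ) ≤ (t₀.2 : ℝ) := by exact_mod_cast hyP.2
  have ht0 : 0 ≤ t := htdef ▸ div_nonneg (by linarith) hD.le
  have ht1 : t ≤ 1 := by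
    rw [htdef, div_le_one hD]; linarith
  have htkey : t * ((t₀.2 : ℝ) - (b₀.2 : ℝ)) = (P.2 : ℝ) - (b₀.2 : ℝ) := by
    rw [htdef]; field_simp
  obtain ⟨W, hWdef⟩ : ∃ W' : ℝ × ℝ, W' = (1 - t) • ι2 b₀ + t • ι2 t₀ := ⟨_, rfl⟩
  have hW1 : W.1 = (1 - t) * (b₀.1 : ℝ) + t * (t₀.1 : ℝ) := by
    rw [hWdef]; simp [ι2]
  have hW2 : W.2 = (P.2 : ℝ) := by
    rw [hWdef]; simp only [Prod.snd_add, Prod.smul_snd, smul_eq_mul, ι2]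
    linarith [htkey]
  obtain ⟨er, herdef⟩ : ∃ er : ℝ, er = (e : ℝ) := ⟨_, rfl⟩
  obtain ⟨mr, hmrdef⟩ : ∃ mr : ℝ, mr = (m : ℝ) := ⟨_, rfl⟩
  have her2 : er * er = 1 := by
    rcases he with h | h <;> rw [herdef, h] <;> norm_num
  obtain ⟨s₀, hs₀def⟩ : ∃ s : ℝ, s = er * W.1 + mr * W.2 := ⟨_, rfl⟩
  have hevW : s₀ = (1 - t) * ((ev (e, m) b₀ : ℤ) : ℝ) + t * ((ev (e, m) t₀ : ℤ) : ℝ) := by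
    rw [hs₀def, hW1]
    have hW2' : W.2 = (1 - t) * (b₀.2 : ℝ) + t * (t₀.2 : ℝ) := by
      rw [hWdef]; simp [ι2]
    rw [hW2', herdef, hmrdef]
    simp only [ev]
    push_cast
    ring
  have hs₀ : s₀ ≤ (c : ℝ) - 2 := by
    rw [hevW]
    have h1 : ((ev (e, m) b₀ : ℤ) : ℝ) ≤ (c : ℝ) - 2 := by
      have : ((ev (e, m) b₀ : ℤ) : ℝ) ≤ ((c - 2 : ℤ) : ℝ) := by exact_mod_cast hsb
      push_cast at this; linarith
    have h2 : ((ev (e, m) t₀ : ℤ) : ℝ) ≤ (c : ℝ) - 2 := by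
      have : ((ev (e, m) t₀ : ℤ) : ℝ) ≤ ((c - 2 : ℤ) : ℝ) := by exact_mod_cast hst
      push_cast at this; linarith
    nlinarith
  have hcs : (0 : ℝ) < (c : ℝ) - s₀ := by linarith
  obtain ⟨μ, hμdef⟩ : ∃ μ : ℝ, μ = 1 / ((c : ℝ) - s₀) := ⟨_, rfl⟩
  have hμ0 : 0 < μ := by rw [hμdef]; positivity
  have hμ1 : μ ≤ 1 := by rw [hμdef, div_le_one hcs]; linarith
  have hμc : μ * ((c : ℝ) - s₀) = 1 := by rw [hμdef]; field_simp
  have hcP : er * (P.1 : ℝ) + mr * (P.2 : ℝ) = (c : ℝ) := by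
    rw [herdef, hmrdef, hc]; simp only [ev]; push_cast; ring
  have hWx : er * (W.1 - (P.1 : ℝ)) = s₀ - (c : ℝ) := by
    rw [hs₀def, hW2]; linarith [hcP]
  have hW1x : W.1 - (P.1 : ℝ) = er * (s₀ - (c : ℝ)) := by
    linear_combination er * hWx - (W.1 - (P.1 : ℝ)) * her2
  have hμW : μ * (W.1 - (P.1 : ℝ)) = -er := by
    linear_combination μ * hW1x - er * hμc
  have hX : ι2 (P.1 - e, P.2) = (1 - μ) • ι2 P + μ • W := by
    have h2' : ((1 - μ) • ι2 P + μ • W).2 = (P.2 : ℝ) := by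
      simp only [Prod.snd_add, Prod.smul_snd, smul_eq_mul, ι2, hW2]; ring
    have h1' : ((1 - μ) • ι2 P + μ • W).1 = (P.1 : ℝ) - er := by
      simp only [Prod.fst_add, Prod.smul_fst, smul_eq_mul, ι2]
      linear_combination hμW
    refine Prod.ext ?_ ?_
    · rw [h1', herdef]; simp [ι2]
    · rw [h2']; simp [ι2]
  have hconv : Convex ℝ (convexHull ℝ (ι2 '' (↑F : Set (ℤ × ℤ)))) := convex_convexHull _ _
  have hmemP : ι2 P ∈ convexHull ℝ (ι2 '' (↑F : Set (ℤ × ℤ))) :=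
    subset_convexHull _ _ ⟨P, Finset.mem_coe.2 hPF, rfl⟩
  have hmemb : ι2 b₀ ∈ convexHull ℝ (ι2 '' (↑F : Set (ℤ × ℤ))) :=
    subset_convexHull _ _ ⟨b₀, Finset.mem_coe.2 hb₀, rfl⟩
  have hmemt : ι2 t₀ ∈ convexHull ℝ (ι2 '' (↑F : Set (ℤ × ℤ))) :=
    subset_convexHull _ _ ⟨t₀, Finset.mem_coe.2 ht₀, rfl⟩
  have hmemW : W ∈ convexHull ℝ (ι2 '' (↑F : Set (ℤ × ℤ))) := by
    apply hconv.segment_subset hmemb hmemt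
    exact ⟨1 - t, t, by linarith, ht0, by ring, hWdef.symm⟩
  have hmemX : ι2 (P.1 - e, P.2) ∈ convexHull ℝ (ι2 '' (↑F : Set (ℤ × ℤ))) := by
    rw [hX]
    apply hconv.segment_subset hmemP hmemW
    exact ⟨1 - μ, μ, by linarith, hμ0.le, by ring, rfl⟩
  have hXF : (P.1 - e, P.2) ∈ F := hF4 _ hmemX
  have hXne : (P.1 - e, P.2) ≠ P := by
    intro h
    have : P.1 - e = P.1 := congrArg Prod.fst h
    rcases he with h' | h' <;> omega
  have hfin := hmarg _ hXF hXne
  have hevX : ev (e, m) (P.1 - e, P.2) = ev (e, m) P - 1 := by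
    simp only [ev]
    rcases he with h' | h' <;> rw [h'] <;> ring
  omega

/-! ### The combinatorial core theorem -/

theorem core {F E : Finset (ℤ × ℤ)} {d : ℤ}
    (hd1 : 1 ≤ d)
    (hF4 : ∀ X : ℤ × ℤ, ι2 X ∈ convexHull ℝ (ι2 '' ↑F) → X ∈ F)
    (hEF : E ⊆ F)
    (hyw : wd (0, 1) F = d)
    (hE2 : ∀ u v : ℤ × ℤ, ∃ P ∈ E, P ≠ u ∧ P ≠ v)
    (hdrop : ∀ P ∈ E, (F.erase P).Nonempty →
      ∃ g : ℤ × ℤ, g ≠ 0 ∧ wd g (F.erase P) ≤ d - 1) :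
    ∃ m : ℤ, wd (1, m) F ≤ d := by
  classical
  by_contra hcon
  push_neg at hcon
  have hbig : ∀ m : ℤ, d + 1 ≤ wd (1, m) F := fun m => by have := hcon m; omega
  have hFne : F.Nonempty := by
    obtain ⟨P, hP, -⟩ := hE2 0 0
    exact ⟨P, hEF hP⟩
  obtain ⟨t₀, ht₀F, ht₀⟩ := exists_wmax (g := (0, 1)) hFne
  obtain ⟨b₀, hb₀F, hb₀⟩ := exists_wmin (g := (0, 1)) hFne
  rw [ev_01] at ht₀ hb₀
  have hwd01 : t₀.2 - b₀.2 = d := by rw [ht₀, hb₀]; exact hyw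
  have hybnd : ∀ Q ∈ F, b₀.2 ≤ Q.2 ∧ Q.2 ≤ t₀.2 := by
    intro Q hQ
    constructor
    · rw [hb₀]; have := wmin_le (g := (0, 1)) hQ; rwa [ev_01] at this
    · rw [ht₀]; have := le_wmax (g := (0, 1)) hQ; rwa [ev_01] at this
  have hyd : b₀.2 < t₀.2 := by omega
  obtain ⟨Ps, hPsE, hPst, hPsb⟩ := hE2 t₀ b₀
  have hPsF : Ps ∈ F := hEF hPsE
  have ht₀e : t₀ ∈ F.erase Ps := Finset.mem_erase.2 ⟨fun h => hPst h.symm, ht₀F⟩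
  have hb₀e : b₀ ∈ F.erase Ps := Finset.mem_erase.2 ⟨fun h => hPsb h.symm, hb₀F⟩
  have hene : (F.erase Ps).Nonempty := ⟨t₀, ht₀e⟩
  obtain ⟨g, hg0, hgw⟩ := hdrop Ps hPsE hene
  -- reduce to a form (1, m)
  have hred : ∃ m : ℤ, wd (1, m) (F.erase Ps) ≤ d - 1 := by
    rcases eq_or_ne g.1 0 with ha | ha
    · -- vertical form: impossible
      exfalso
      have hb : g.2 ≠ 0 := by
        intro h; exact hg0 (Prod.ext ha h)
      have h1 : ev g t₀ - ev g b₀ = g.2 * (t₀.2 - b₀.2) := by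
        simp only [ev, ha]; ring
      have h2 : ev g b₀ - ev g t₀ = -(g.2 * (t₀.2 - b₀.2)) := by omega
      have hd1' := diff_le_wd (g := g) ht₀e hb₀e
      have hd2' := diff_le_wd (g := g) hb₀e ht₀e
      have h5 : |g.2| * d ≤ wd g (F.erase Ps) := by
        rcases abs_cases g.2 with ⟨h, _⟩ | ⟨h, _⟩ <;> rw [h] <;> nlinarith [hwd01]
      have h6 : d ≤ wd g (F.erase Ps) := by
        have h3 : 1 ≤ |g.2| := by rcases abs_cases g.2 with ⟨h, _⟩ | ⟨h, _⟩ <;> omega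
        nlinarith
      omega
    · rcases le_or_gt 2 |g.1| with ha2 | ha2
      · -- strip reduction
        have hyQ : ∀ Q ∈ F.erase Ps, b₀.2 ≤ Q.2 ∧ Q.2 ≤ b₀.2 + d := by
          intro Q hQ
          have := hybnd Q (Finset.mem_of_mem_erase hQ); omega
        have hsQ : ∀ Q ∈ F.erase Ps, wmin g (F.erase Ps) ≤ ev (g.1, g.2) Q ∧
            ev (g.1, g.2) Q ≤ wmin g (F.erase Ps) + (d - 1) := by
          intro Q hQ
          have h1 := wmin_le (g := g) hQ
          have h2 := le_wmax (g := g) hQ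
          have h3 : ev (g.1, g.2) Q = ev g Q := rfl
          simp only [wd] at hgw
          omega
        obtain ⟨m, hm⟩ := strip (G := F.erase Ps) g.1 g.2 b₀.2 d (d - 1)
          (wmin g (F.erase Ps)) ha (by omega) (by omega) hyQ hsQ
        refine ⟨m, wd_le_of_bounds hene fun P hP Q hQ => ?_⟩
        have h := hm P hP Q hQ
        nlinarith
      · -- |g.1| = 1
        have h1 : g.1 = 1 ∨ g.1 = -1 := by
          rcases abs_cases g.1 with ⟨h, _⟩ | ⟨h, _⟩ <;> omega
        rcases h1 with h | h
        · refine ⟨g.2, ?_⟩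
          have hgg : ((1 : ℤ), g.2) = g := Prod.ext h.symm rfl
          rwa [hgg]
        · refine ⟨-g.2, ?_⟩
          have hgg : ((1 : ℤ), -g.2) = -g := by
            apply Prod.ext <;> simp [h]
          rw [hgg, wd_neg hene]
          exact hgw
  obtain ⟨m, hm⟩ := hred
  have hbigm := hbig m
  obtain ⟨Pmax, hPmaxF, hPmax⟩ := exists_wmax (g := (1, m)) hFne
  obtain ⟨Pmin, hPminF, hPmin⟩ := exists_wmin (g := (1, m)) hFne
  have hwdF : wd (1, m) F = ev (1, m) Pmax - ev (1, m) Pmin := by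
    simp only [wd]; omega
  have hmE : wmax (1, m) (F.erase Ps) - wmin (1, m) (F.erase Ps) ≤ d - 1 := hm
  have hbigm' : d + 1 ≤ wmax (1, m) F - wmin (1, m) F := hbigm
  by_cases hmaxP : Pmax = Ps <;> by_cases hminP : Pmin = Ps
  · rw [hmaxP] at hwdF; rw [hminP] at hwdF
    omega
  · -- max at Ps, margin on max side
    have hPmine : Pmin ∈ F.erase Ps := Finset.mem_erase.2 ⟨hminP, hPminF⟩
    apply contra hF4 hPsF ht₀F hb₀F hPst hPsb hybnd hyd 1 m (Or.inl rfl)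
    intro Q hQ hQP
    have hQe : Q ∈ F.erase Ps := Finset.mem_erase.2 ⟨hQP, hQ⟩
    have h1 := le_wmax (g := (1, m)) hQe
    have h2 := wmin_le (g := (1, m)) hPmine
    have h3 : ev (1, m) Ps = wmax (1, m) F := hmaxP ▸ hPmax
    omega
  · -- min at Ps, margin on min side
    have hPmaxe : Pmax ∈ F.erase Ps := Finset.mem_erase.2 ⟨hmaxP, hPmaxF⟩
    apply contra hF4 hPsF ht₀F hb₀F hPst hPsb hybnd hyd (-1) (-m) (Or.inr rfl)
    intro Q hQ hQP
    have hQe : Q ∈ F.erase Ps := Finset.mem_erase.2 ⟨hQP, hQ⟩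
    have h1 := wmin_le (g := (1, m)) hQe
    have h2 := le_wmax (g := (1, m)) hPmaxe
    have h3 : ev (1, m) Ps = wmin (1, m) F := hminP ▸ hPmin
    have hev1 : ev (-1, -m) Q = -ev (1, m) Q := by simp [ev]; ring
    have hev2 : ev (-1, -m) Ps = -ev (1, m) Ps := by simp [ev]; ring
    omega
  · have hPmaxe : Pmax ∈ F.erase Ps := Finset.mem_erase.2 ⟨hmaxP, hPmaxF⟩
    have hPmine : Pmin ∈ F.erase Ps := Finset.mem_erase.2 ⟨hminP, hPminF⟩
    have h1 := diff_le_wd (g := (1, m)) hPmaxe hPmine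
    have h2 : wd (1, m) (F.erase Ps) ≤ d - 1 := hm
    omega

/-! ### Unimodular change of coordinates -/

section Transform

variable (p q a b : ℤ)

def mver (P : ℤ × ℤ) : ℤ × ℤ := (p * P.1 + q * P.2, a * P.1 + b * P.2)

def imver (X : ℤ × ℤ) : ℤ × ℤ := (b * X.1 - q * X.2, -a * X.1 + p * X.2)

def cphi (g : ℤ × ℤ) : ℤ × ℤ := (g.1 * p + g.2 * a, g.1 * q + g.2 * b)

def cpsi (g : ℤ × ℤ) : ℤ × ℤ := (g.1 * b - g.2 * a, -(g.1 * q) + g.2 * p)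

variable {p q a b}

lemma mv_imv (hdet : p * b - q * a = 1) (X : ℤ × ℤ) : mver p q a b (imver p q a b X) = X := by
  apply Prod.ext
  · show p * (b * X.1 - q * X.2) + q * (-a * X.1 + p * X.2) = X.1
    linear_combination X.1 * hdet
  · show a * (b * X.1 - q * X.2) + b * (-a * X.1 + p * X.2) = X.2
    linear_combination X.2 * hdet

lemma imv_mv (hdet : p * b - q * a = 1) (P : ℤ × ℤ) : imver p q a b (mver p q a b P) = P := by
  apply Prod.ext
  · show b * (p * P.1 + q * P.2) - q * (a * P.1 + b * P.2) = P.1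
    linear_combination P.1 * hdet
  · show -a * (p * P.1 + q * P.2) + p * (a * P.1 + b * P.2) = P.2
    linear_combination P.2 * hdet

lemma mv_inj (hdet : p * b - q * a = 1) : Function.Injective (mver p q a b) := by
  intro x y h
  have := congrArg (imver p q a b) h
  rwa [imv_mv hdet, imv_mv hdet] at this

lemma cphi_cpsi (hdet : p * b - q * a = 1) (g : ℤ × ℤ) :
    cphi p q a b (cpsi p q a b g) = g := by
  apply Prod.ext
  · show (g.1 * b - g.2 * a) * p + (-(g.1 * q) + g.2 * p) * a = g.1
    linear_combination g.1 * hdet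
  · show (g.1 * b - g.2 * a) * q + (-(g.1 * q) + g.2 * p) * b = g.2
    linear_combination g.2 * hdet

lemma ev_mv (g P : ℤ × ℤ) : ev g (mver p q a b P) = ev (cphi p q a b g) P := by
  simp only [ev, mver, cphi]
  ring

lemma wd_mv (g : ℤ × ℤ) (G : Finset (ℤ × ℤ)) :
    wd g (G.image (mver p q a b)) = wd (cphi p q a b g) G := by
  have him : (G.image (mver p q a b)).image (ev g) = G.image (ev (cphi p q a b g)) := by
    rw [Finset.image_image]
    congr 1
    funext P
    exact ev_mv g P
  simp only [wd, wmax, wmin, him]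

/-- real version of `mver` -/
def mvR (z : ℝ × ℝ) : ℝ × ℝ := ((p : ℝ) * z.1 + (q : ℝ) * z.2, (a : ℝ) * z.1 + (b : ℝ) * z.2)

lemma mvR_linear : IsLinearMap ℝ (mvR (p := p) (q := q) (a := a) (b := b)) := by
  constructor
  · intro x y
    apply Prod.ext <;> simp [mvR, Prod.fst_add, Prod.snd_add] <;> ring
  · intro c x
    apply Prod.ext <;>
      simp [mvR, Prod.smul_fst, Prod.smul_snd, smul_eq_mul] <;> ring

lemma mvR_ι2 (P : ℤ × ℤ) : mvR (p := p) (q := q) (a := a) (b := b) (ι2 P) = ι2 (mver p q a b P) := by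
  apply Prod.ext <;> simp [mvR, mver, ι2] <;> push_cast <;> ring

lemma hull_image_subset (G : Finset (ℤ × ℤ)) :
    convexHull ℝ (ι2 '' ↑(G.image (mver p q a b))) ⊆
      mvR (p := p) (q := q) (a := a) (b := b) '' (convexHull ℝ (ι2 '' ↑G)) := by
  have hcoe : (ι2 '' ↑(G.image (mver p q a b))) ⊆
      mvR (p := p) (q := q) (a := a) (b := b) '' (convexHull ℝ (ι2 '' ↑G)) := by
    rintro z ⟨P', hP', rfl⟩
    rw [Finset.mem_coe, Finset.mem_image] at hP'
    obtain ⟨P, hP, rfl⟩ := hP'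
    exact ⟨ι2 P, subset_convexHull _ _ ⟨P, Finset.mem_coe.2 hP, rfl⟩, mvR_ι2 P⟩
  apply convexHull_min hcoe
    ((convex_convexHull _ _).is_linear_image mvR_linear)

lemma mvR_inverse (hdet : p * b - q * a = 1) {w : ℝ × ℝ} {X : ℤ × ℤ}
    (h : mvR (p := p) (q := q) (a := a) (b := b) w = ι2 X) : w = ι2 (imver p q a b X) := by
  have h1 : (p : ℝ) * w.1 + (q : ℝ) * w.2 = (X.1 : ℝ) := congrArg Prod.fst h
  have h2 : (a : ℝ) * w.1 + (b : ℝ) * w.2 = (X.2 : ℝ) := congrArg Prod.snd h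
  have hdetR : (p : ℝ) * (b : ℝ) - (q : ℝ) * (a : ℝ) = 1 := by exact_mod_cast hdet
  apply Prod.ext
  · show w.1 = ((b * X.1 - q * X.2 : ℤ) : ℝ)
    push_cast
    linear_combination (b : ℝ) * h1 - (q : ℝ) * h2 - w.1 * hdetR
  · show w.2 = ((-a * X.1 + p * X.2 : ℤ) : ℝ)
    push_cast
    linear_combination (p : ℝ) * h2 - (a : ℝ) * h1 - w.2 * hdetR

end Transform

lemma pair_ne_zero (x y : ℤ) : (¬(x = 0 ∧ y = 0)) ↔ ((x, y) : ℤ × ℤ) ≠ 0 := by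
  rw [Ne, Prod.mk_eq_zero]

end Stmt8Aux

open Stmt8Aux in
/-- if removing any extreme point of `Δ` decreases the lattice width
`d = lw(Δ)`, then some unimodular affine transformation maps `Δ` into `[0,d] × [0,d]`. -/
theorem stmt8 (Δ : Set (ℝ × ℝ)) (hΔ : IsLatticePolygon Δ) (h2 : (interior Δ).Nonempty)
    (d : ℝ) (hd : latticeWidth Δ = d)
    (hmin : ∀ P ∈ Set.extremePoints ℝ Δ,
      latticeWidth (convexHull ℝ ((Δ ∩ Set.range ι2) \ {P})) < d) :
    ∃ (A : Matrix (Fin 2) (Fin 2) ℤ) (b : ℤ × ℤ),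
      (A.det = 1 ∨ A.det = -1) ∧
      (fun x : ℝ × ℝ =>
          (((A 0 0 : ℤ) : ℝ) * x.1 + ((A 0 1 : ℤ) : ℝ) * x.2 + ((b.1 : ℤ) : ℝ),
           ((A 1 0 : ℤ) : ℝ) * x.1 + ((A 1 1 : ℤ) : ℝ) * x.2 + ((b.2 : ℤ) : ℝ))) '' Δ
        ⊆ Set.Icc (0 : ℝ) d ×ˢ Set.Icc (0 : ℝ) d := by
  classical
  obtain ⟨S, hS⟩ := hΔ
  have hSne : S.Nonempty := by
    rcases Finset.eq_empty_or_nonempty S with h | h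
    · exfalso
      rw [h] at hS
      simp only [Finset.coe_empty, Set.image_empty, convexHull_empty] at hS
      rw [hS, interior_empty] at h2
      exact Set.not_nonempty_empty h2
    · exact h
  -- the finset of all lattice points of Δ
  have hbnd : ∀ P : ℤ × ℤ, ι2 P ∈ Δ →
      wmin (1, 0) S ≤ P.1 ∧ P.1 ≤ wmax (1, 0) S ∧
      wmin (0, 1) S ≤ P.2 ∧ P.2 ≤ wmax (0, 1) S := by
    intro P hP
    rw [hS] at hP
    have h1 := hull_le_wmax (g := ((1 : ℤ), (0 : ℤ))) (G := S) hP
    have h2' := wmin_le_hull (g := ((1 : ℤ), (0 : ℤ))) (G := S) hP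
    have h3 := hull_le_wmax (g := ((0 : ℤ), (1 : ℤ))) (G := S) hP
    have h4 := wmin_le_hull (g := ((0 : ℤ), (1 : ℤ))) (G := S) hP
    simp only [Set.mem_setOf_eq, ι2] at h1 h2' h3 h4
    norm_num at h1 h2' h3 h4
    exact ⟨by exact_mod_cast h2', by exact_mod_cast h1,
      by exact_mod_cast h4, by exact_mod_cast h3⟩
  obtain ⟨F, hFdef⟩ : ∃ F : Finset (ℤ × ℤ), F =
      (Finset.Icc (wmin (1, 0) S, wmin (0, 1) S) (wmax (1, 0) S, wmax (0, 1) S)).filter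
        (fun P => ι2 P ∈ Δ) := ⟨_, rfl⟩
  have hmemF : ∀ P : ℤ × ℤ, P ∈ F ↔ ι2 P ∈ Δ := by
    intro P
    constructor
    · intro h
      rw [hFdef] at h
      exact (Finset.mem_filter.1 h).2
    · intro h
      rw [hFdef]
      refine Finset.mem_filter.2 ⟨?_, h⟩
      have hb := hbnd P h
      simp only [Finset.mem_Icc, Prod.le_def]
      exact ⟨⟨hb.1, hb.2.2.1⟩, ⟨hb.2.1, hb.2.2.2⟩⟩
  have hSF : S ⊆ F := by
    intro Q hQ
    exact (hmemF Q).2 (hS ▸ subset_convexHull ℝ _ ⟨Q, Finset.mem_coe.2 hQ, rfl⟩)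
  have hFne : F.Nonempty := hSne.mono hSF
  have hΔF : Δ = convexHull ℝ (ι2 '' ↑F) := by
    apply Set.Subset.antisymm
    · rw [hS]
      exact convexHull_mono (Set.image_mono hSF)
    · apply convexHull_min
      · rintro z ⟨P, hP, rfl⟩
        exact (hmemF P).1 (Finset.mem_coe.1 hP)
      · rw [hS]; exact convex_convexHull ℝ _
  have hF4 : ∀ X : ℤ × ℤ, ι2 X ∈ convexHull ℝ (ι2 '' ↑F) → X ∈ F :=
    fun X hX => (hmemF X).2 (by rw [hΔF]; exact hX)
  have hΔconv : Convex ℝ Δ := by rw [hΔF]; exact convex_convexHull ℝ _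
  have hΔcomp : IsCompact Δ := by
    rw [hS]; exact (S.finite_toSet.image ι2).isCompact_convexHull ℝ
  -- width over Δ is the integer width over F
  have hwidthΔ : ∀ x y : ℤ,
      sSup ((fun z : ℝ × ℝ => (x : ℝ) * z.1 + (y : ℝ) * z.2) '' Δ) -
        sInf ((fun z : ℝ × ℝ => (x : ℝ) * z.1 + (y : ℝ) * z.2) '' Δ)
        = (wd (x, y) F : ℝ) := by
    intro x y
    rw [hΔF]
    exact width_hull x y hFne
  -- least integer width
  have hexleast : ∃ n₀ : ℤ, (∃ g : ℤ × ℤ, g ≠ 0 ∧ wd g F = n₀) ∧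
      ∀ z : ℤ, (∃ g : ℤ × ℤ, g ≠ 0 ∧ wd g F = z) → n₀ ≤ z := by
    have hdec : DecidablePred fun n : ℤ => ∃ g : ℤ × ℤ, g ≠ 0 ∧ wd g F = n :=
      Classical.decPred _
    exact Int.exists_least_of_bdd
      ⟨0, fun n hn => by obtain ⟨g, -, h⟩ := hn; exact h ▸ wd_nonneg hFne⟩
      ⟨wd (1, 0) F, ⟨(1, 0), (pair_ne_zero 1 0).1 (by norm_num), rfl⟩⟩
  obtain ⟨n₀, ⟨g₀, hg₀0, hg₀w⟩, hleast⟩ := hexleast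
  have hLW : latticeWidth Δ = (n₀ : ℝ) := by
    rw [latticeWidth]
    apply le_antisymm
    · apply csInf_le
      · refine ⟨0, ?_⟩
        rintro w ⟨x, y, hxy, rfl⟩
        rw [hwidthΔ x y]
        exact_mod_cast wd_nonneg hFne
      · refine ⟨g₀.1, g₀.2, (pair_ne_zero g₀.1 g₀.2).2 (by simpa using hg₀0), ?_⟩
        rw [hwidthΔ g₀.1 g₀.2]
        norm_cast
        rw [show ((g₀.1, g₀.2) : ℤ × ℤ) = g₀ from rfl, hg₀w]
    · refine le_csInf ⟨_, ⟨1, 0, by norm_num, rfl⟩⟩ ?_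
      rintro w ⟨x, y, hxy, rfl⟩
      rw [hwidthΔ x y]
      have hle : n₀ ≤ wd (x, y) F := hleast _ ⟨(x, y), (pair_ne_zero x y).1 hxy, rfl⟩
      exact_mod_cast hle
  have hdn : d = (n₀ : ℝ) := by rw [← hd, hLW]
  have hn₀0 : 0 ≤ n₀ := hg₀w ▸ wd_nonneg hFne
  -- a set inside a line has empty interior, applied twice below
  have hn₀1 : 1 ≤ n₀ := by
    by_contra hcon
    have hn00 : n₀ = 0 := by omega
    obtain ⟨Pw, hPwF⟩ := hFne
    have hwd0 : wd g₀ F = 0 := by rw [hg₀w, hn00]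
    have hline : Δ ⊆ {z : ℝ × ℝ | (g₀.1 : ℝ) * z.1 + (g₀.2 : ℝ) * z.2
        = ((ev g₀ Pw : ℤ) : ℝ)} := by
      rw [hΔF]
      apply convexHull_min _ (convex_hyperplane (lin2 _ _) _)
      rintro z ⟨Q, hQ, rfl⟩
      simp only [Set.mem_setOf_eq]
      rw [evR_ι2]
      have h1 := le_wmax (g := g₀) (Finset.mem_coe.1 hQ)
      have h2 := wmin_le (g := g₀) (Finset.mem_coe.1 hQ)
      have h3 := le_wmax (g := g₀) hPwF
      have h4 := wmin_le (g := g₀) hPwF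
      simp only [wd] at hwd0
      have : ev g₀ Q = ev g₀ Pw := by omega
      rw [this]
    have hint := interior_empty_of_subset_line (a := (g₀.1 : ℝ)) (b := (g₀.2 : ℝ))
      (by
        rintro ⟨h1, h2⟩
        apply hg₀0
        apply Prod.ext
        · exact_mod_cast h1
        · exact_mod_cast h2) hline
    rw [hint] at h2
    exact Set.not_nonempty_empty h2
  -- extreme points
  obtain ⟨E, hEdef⟩ : ∃ E : Finset (ℤ × ℤ),
      E = F.filter (fun P => ι2 P ∈ Set.extremePoints ℝ Δ) := ⟨_, rfl⟩
  have hEF : E ⊆ F := hEdef ▸ Finset.filter_subset _ _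
  have hEext : Set.extremePoints ℝ Δ ⊆ ι2 '' ↑S := by
    rw [hS]; exact extremePoints_convexHull_subset
  have hE2 : ∀ u v : ℤ × ℤ, ∃ P ∈ E, P ≠ u ∧ P ≠ v := by
    intro u v
    by_contra hcon
    push_neg at hcon
    have hsub : Set.extremePoints ℝ Δ ⊆ {ι2 u, ι2 v} := by
      intro z hz
      obtain ⟨Q, hQS, rfl⟩ := hEext hz
      have hQE : Q ∈ E := hEdef ▸ Finset.mem_filter.2 ⟨hSF (Finset.mem_coe.1 hQS), hz⟩
      rcases eq_or_ne Q u with h | h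
      · rw [h]; exact Set.mem_insert _ _
      · rw [hcon Q hQE h]; exact Set.mem_insert_of_mem _ (Set.mem_singleton _)
    have hKM := closure_convexHull_extremePoints hΔcomp hΔconv
    have hseg : Δ ⊆ convexHull ℝ {ι2 u, ι2 v} := by
      have hclosed : IsClosed (convexHull ℝ ({ι2 u, ι2 v} : Set (ℝ × ℝ))) :=
        (((Set.finite_singleton (ι2 v)).insert (ι2 u)).isCompact_convexHull ℝ).isClosed
      calc Δ = closure (convexHull ℝ (Δ.extremePoints ℝ)) := hKM.symm
        _ ⊆ closure (convexHull ℝ {ι2 u, ι2 v}) := closure_mono (convexHull_mono hsub)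
        _ = convexHull ℝ {ι2 u, ι2 v} := hclosed.closure_eq
    have hlineΔ : ∃ x y c : ℝ, ¬(x = 0 ∧ y = 0) ∧
        Δ ⊆ {z : ℝ × ℝ | x * z.1 + y * z.2 = c} := by
      rcases eq_or_ne (ι2 u) (ι2 v) with h | h
      · refine ⟨1, 0, (ι2 u).1, by norm_num, ?_⟩
        intro z hz
        have h5 : z ∈ convexHull ℝ ({ι2 u} : Set (ℝ × ℝ)) := by
          have h6 := hseg hz
          rwa [← h, Set.pair_eq_singleton] at h6
        rw [convexHull_singleton, Set.mem_singleton_iff] at h5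
        simp only [Set.mem_setOf_eq, h5]
        ring
      · refine ⟨(ι2 u).2 - (ι2 v).2, (ι2 v).1 - (ι2 u).1,
          (ι2 u).2 * (ι2 v).1 - (ι2 v).2 * (ι2 u).1, ?_, ?_⟩
        · rintro ⟨h1, h2⟩
          exact h (Prod.ext (by linarith) (by linarith))
        · intro z hz
          have hz2 := hseg hz
          have : convexHull ℝ ({ι2 u, ι2 v} : Set (ℝ × ℝ)) ⊆
              {z : ℝ × ℝ | ((ι2 u).2 - (ι2 v).2) * z.1 + ((ι2 v).1 - (ι2 u).1) * z.2
                = (ι2 u).2 * (ι2 v).1 - (ι2 v).2 * (ι2 u).1} := by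
            apply convexHull_min _ (convex_hyperplane (lin2 _ _) _)
            rintro w (rfl | rfl)
            · simp only [Set.mem_setOf_eq]; ring
            · simp only [Set.mem_setOf_eq]; ring
          exact this hz2
    obtain ⟨x, y, c, hxy, hlsub⟩ := hlineΔ
    have hint := interior_empty_of_subset_line hxy hlsub
    rw [hint] at h2
    exact Set.not_nonempty_empty h2
  -- droppability, in integer terms
  have hlat : Δ ∩ Set.range ι2 = ι2 '' ↑F := by
    apply Set.Subset.antisymm
    · rintro z ⟨hzΔ, X, rfl⟩
      exact ⟨X, Finset.mem_coe.2 ((hmemF X).2 hzΔ), rfl⟩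
    · rintro z ⟨X, hX, rfl⟩
      exact ⟨(hmemF X).1 (Finset.mem_coe.1 hX), ⟨X, rfl⟩⟩
  have hdrop : ∀ P ∈ E, (F.erase P).Nonempty →
      ∃ g : ℤ × ℤ, g ≠ 0 ∧ wd g (F.erase P) ≤ n₀ - 1 := by
    intro P hPE hne
    have hPext : ι2 P ∈ Set.extremePoints ℝ Δ := by
      rw [hEdef] at hPE
      exact (Finset.mem_filter.1 hPE).2
    have h := hmin (ι2 P) hPext
    have hset : (Δ ∩ Set.range ι2) \ {ι2 P} = ι2 '' ↑(F.erase P) := by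
      rw [hlat, Finset.coe_erase, Set.image_diff ι2_injective, Set.image_singleton]
    rw [hset, latticeWidth] at h
    have hWpne : {w : ℝ | ∃ x y : ℤ, ¬(x = 0 ∧ y = 0) ∧
        w = sSup ((fun z : ℝ × ℝ => (x : ℝ) * z.1 + (y : ℝ) * z.2) ''
            convexHull ℝ (ι2 '' ↑(F.erase P))) -
          sInf ((fun z : ℝ × ℝ => (x : ℝ) * z.1 + (y : ℝ) * z.2) ''
            convexHull ℝ (ι2 '' ↑(F.erase P)))}.Nonempty := ⟨_, 1, 0, by norm_num, rfl⟩
    obtain ⟨w, ⟨x, y, hxy, rfl⟩, hwlt⟩ := exists_lt_of_csInf_lt hWpne h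
    refine ⟨(x, y), (pair_ne_zero x y).1 hxy, ?_⟩
    rw [width_hull x y hne, hdn] at hwlt
    have : wd (x, y) (F.erase P) < n₀ := by exact_mod_cast hwlt
    omega
  -- primitivity of g₀
  obtain ⟨α, β⟩ := g₀
  have hgcd : Int.gcd α β = 1 := by
    by_contra hk1
    have hk0 : Int.gcd α β ≠ 0 := by
      intro h
      exact hg₀0 (by
        obtain ⟨h1, h2⟩ := Int.gcd_eq_zero_iff.1 h
        rw [h1, h2]; rfl)
    have hk2 : 2 ≤ (Int.gcd α β : ℤ) := by
      have : 1 ≤ Int.gcd α β := Nat.one_le_iff_ne_zero.2 hk0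
      have h2' : Int.gcd α β ≠ 1 := hk1
      omega
    obtain ⟨α', hα'⟩ : ((Int.gcd α β : ℤ)) ∣ α := Int.gcd_dvd_left α β
    obtain ⟨β', hβ'⟩ : ((Int.gcd α β : ℤ)) ∣ β := Int.gcd_dvd_right α β
    have hne' : ((α', β') : ℤ × ℤ) ≠ 0 := by
      intro h0
      apply hg₀0
      have h1 : α' = 0 := congrArg Prod.fst h0
      have h2 : β' = 0 := congrArg Prod.snd h0
      rw [h1, mul_zero] at hα'
      rw [h2, mul_zero] at hβ'
      rw [hα', hβ']; rfl
    have hlow' : n₀ ≤ wd (α', β') F := hleast _ ⟨(α', β'), hne', rfl⟩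
    have hsm : wd ((Int.gcd α β : ℤ) * α', (Int.gcd α β : ℤ) * β') F
        = (Int.gcd α β : ℤ) * wd (α', β') F :=
      wd_smul_pos (g := (α', β')) (by omega) hFne
    rw [← hα', ← hβ'] at hsm
    rw [hsm] at hg₀w
    nlinarith
  -- Bezout
  have hbez := Int.gcd_eq_gcd_ab α β
  rw [hgcd] at hbez
  obtain ⟨p, hp⟩ : ∃ p : ℤ, p = Int.gcdB α β := ⟨_, rfl⟩
  obtain ⟨q, hq⟩ : ∃ q : ℤ, q = -Int.gcdA α β := ⟨_, rfl⟩
  have hdet : p * β - q * α = 1 := by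
    rw [hp, hq]
    push_cast at hbez
    linear_combination -hbez
  -- transform
  have herase : ∀ P : ℤ × ℤ, (F.image (mver p q α β)).erase (mver p q α β P)
      = (F.erase P).image (mver p q α β) := fun P => (Finset.image_erase (mv_inj hdet) F P).symm
  have hF4' : ∀ X : ℤ × ℤ, ι2 X ∈ convexHull ℝ (ι2 '' ↑(F.image (mver p q α β)))
      → X ∈ F.image (mver p q α β) := by
    intro X hX
    obtain ⟨w, hw, hMw⟩ := hull_image_subset (p := p) (q := q) (a := α) (b := β) F hX
    rw [mvR_inverse hdet hMw] at hw
    have : imver p q α β X ∈ F := hF4 _ hw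
    have h2' : mver p q α β (imver p q α β X) ∈ F.image (mver p q α β) :=
      Finset.mem_image_of_mem _ this
    rwa [mv_imv hdet] at h2'
  have hEF' : E.image (mver p q α β) ⊆ F.image (mver p q α β) :=
    Finset.image_subset_image hEF
  have hyw' : wd (0, 1) (F.image (mver p q α β)) = n₀ := by
    rw [wd_mv]
    have : cphi p q α β (0, 1) = (α, β) := by
      simp only [cphi]; norm_num
    rw [this]
    exact hg₀w
  have hE2' : ∀ u v : ℤ × ℤ, ∃ P ∈ E.image (mver p q α β), P ≠ u ∧ P ≠ v := by
    intro u v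
    obtain ⟨P, hPE, hP1, hP2⟩ := hE2 (imver p q α β u) (imver p q α β v)
    refine ⟨mver p q α β P, Finset.mem_image_of_mem _ hPE, ?_, ?_⟩
    · intro h
      apply hP1
      have := congrArg (imver p q α β) h
      rwa [imv_mv hdet] at this
    · intro h
      apply hP2
      have := congrArg (imver p q α β) h
      rwa [imv_mv hdet] at this
  have hdrop' : ∀ P' ∈ E.image (mver p q α β),
      ((F.image (mver p q α β)).erase P').Nonempty →
      ∃ g : ℤ × ℤ, g ≠ 0 ∧ wd g ((F.image (mver p q α β)).erase P') ≤ n₀ - 1 := by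
    intro P' hP'E hne'
    obtain ⟨P, hPE, rfl⟩ := Finset.mem_image.1 hP'E
    rw [herase P] at hne' ⊢
    have hne : (F.erase P).Nonempty := by
      obtain ⟨x, hx⟩ := hne'
      obtain ⟨y, hy, -⟩ := Finset.mem_image.1 hx
      exact ⟨y, hy⟩
    obtain ⟨g, hg, hgle⟩ := hdrop P hPE hne
    refine ⟨cpsi p q α β g, ?_, ?_⟩
    · intro h0
      apply hg
      have := congrArg (cphi p q α β) h0
      rw [cphi_cpsi hdet] at this
      rw [this]
      simp [cphi]
    · rw [wd_mv, cphi_cpsi hdet]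
      exact hgle
  -- run the core theorem
  obtain ⟨m, hm⟩ := core hn₀1 hF4' hEF' hyw' hE2' hdrop'
  rw [wd_mv] at hm
  have hcphi1m : cphi p q α β (1, m) = (p + m * α, q + m * β) := by
    simp only [cphi]; norm_num
  rw [hcphi1m] at hm
  -- final assembly
  refine ⟨!![p + m * α, q + m * β; α, β],
    (-(wmin (p + m * α, q + m * β) F), -(wmin (α, β) F)), ?_, ?_⟩
  · left
    rw [Matrix.det_fin_two_of]
    linear_combination hdet
  · rintro w ⟨z, hz, rfl⟩
    have hzF : z ∈ convexHull ℝ (ι2 '' ↑F) := by rw [← hΔF]; exact hz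
    have h1 := hull_le_wmax (g := ((p + m * α, q + m * β) : ℤ × ℤ)) hzF
    have h2' := wmin_le_hull (g := ((p + m * α, q + m * β) : ℤ × ℤ)) hzF
    have h3 := hull_le_wmax (g := ((α, β) : ℤ × ℤ)) hzF
    have h4 := wmin_le_hull (g := ((α, β) : ℤ × ℤ)) hzF
    simp only [Set.mem_setOf_eq] at h1 h2' h3 h4
    have hwv : (wmax (p + m * α, q + m * β) F : ℝ)
        - (wmin (p + m * α, q + m * β) F : ℝ) ≤ (n₀ : ℝ) := by
      have : wd (p + m * α, q + m * β) F ≤ n₀ := hm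
      simp only [wd] at this
      push_cast
      exact_mod_cast (by push_cast; exact_mod_cast this :
        ((wmax (p + m * α, q + m * β) F - wmin (p + m * α, q + m * β) F : ℤ) : ℝ) ≤ (n₀ : ℝ))
    have hwβ : (wmax (α, β) F : ℝ) - (wmin (α, β) F : ℝ) ≤ (n₀ : ℝ) := by
      have : wd (α, β) F ≤ n₀ := le_of_eq hg₀w
      simp only [wd] at this
      exact_mod_cast (by push_cast; exact_mod_cast this :
        ((wmax (α, β) F - wmin (α, β) F : ℤ) : ℝ) ≤ (n₀ : ℝ))
    have hA00 : (!![p + m * α, q + m * β; α, β] : Matrix (Fin 2) (Fin 2) ℤ) 0 0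
        = p + m * α := rfl
    have hA01 : (!![p + m * α, q + m * β; α, β] : Matrix (Fin 2) (Fin 2) ℤ) 0 1
        = q + m * β := rfl
    have hA10 : (!![p + m * α, q + m * β; α, β] : Matrix (Fin 2) (Fin 2) ℤ) 1 0 = α := rfl
    have hA11 : (!![p + m * α, q + m * β; α, β] : Matrix (Fin 2) (Fin 2) ℤ) 1 1 = β := rfl
    simp only [hA00, hA01, hA10, hA11, Set.mem_prod, Set.mem_Icc]
    rw [hdn]
    push_cast at h1 h2' h3 h4 ⊢
    constructor
    · constructor <;> linarith
    · constructor <;> linarith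

end
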